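/- In the splitting gadget NFA with m agents, Player 2 can ensure that the configuration with all agents in f is not reached within the first 2·⌊log₂ m⌋ + 1 steps: no strategy of Player 1 wins in fewer than 2·⌊log₂ m⌋ + 1 steps. -/

import Mathlib

/-- States of the splitting gadget. -/
inductive SQ : Type
  | q0 | q1 | q2 | tgt
deriving DecidableEq

/-- Alphabet of the splitting gadget: a, b and δ. -/
inductive SA : Type
  | a | b | d
deriving DecidableEq

/-- Transitions of the splitting gadget: δ splits q0 to q1 or q2 and loops on q1, q2;
a,b loop on q0; a sends q1 to the target and q2 back to q0; b symmetrically;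
every letter loops on the target. -/
def splitD : SQ → SA → SQ → Prop
  | .q0, .d, .q1 => True
  | .q0, .d, .q2 => True
  | .q0, .a, .q0 => True
  | .q0, .b, .q0 => True
  | .q1, .d, .q1 => True
  | .q1, .a, .tgt => True
  | .q1, .b, .q0 => True
  | .q2, .d, .q2 => True
  | .q2, .b, .tgt => True
  | .q2, .a, .q0 => True
  | .tgt, _, .tgt => True
  | _, _, _ => False

namespace SplitGadget

variable {m : ℕ}

/-- Number of agents in a given state. -/
def cnt (c : Fin m → SQ) (s : SQ) : ℕ := (Finset.univ.filter fun j => c j = s).card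

/-- Half of the q0-agents, chosen to be sent to q2 on a δ-move. -/
noncomputable def splitSet (c : Fin m → SQ) : Finset (Fin m) :=
  (Finset.exists_subset_card_eq (s := (Finset.univ.filter fun j => c j = SQ.q0))
     (n := (Finset.univ.filter fun j => c j = SQ.q0).card / 2) (Nat.div_le_self _ _)).choose

lemma splitSet_spec (c : Fin m → SQ) :
    splitSet c ⊆ (Finset.univ.filter fun j => c j = SQ.q0) ∧
      (splitSet c).card = (Finset.univ.filter fun j => c j = SQ.q0).card / 2 :=
  (Finset.exists_subset_card_eq (s := (Finset.univ.filter fun j => c j = SQ.q0))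
     (n := (Finset.univ.filter fun j => c j = SQ.q0).card / 2) (Nat.div_le_self _ _)).choose_spec

/-- Player 2's response: deterministic resolution of the nondeterminism. -/
noncomputable def step (c : Fin m → SQ) : SA → (Fin m → SQ)
  | SA.a => fun j => match c j with
      | SQ.q1 => SQ.tgt | SQ.q2 => SQ.q0 | x => x
  | SA.b => fun j => match c j with
      | SQ.q2 => SQ.tgt | SQ.q1 => SQ.q0 | x => x
  | SA.d => fun j => if c j = SQ.q0 then (if j ∈ splitSet c then SQ.q2 else SQ.q1) else c j

lemma step_splitD (c : Fin m → SQ) (a : SA) (j : Fin m) : splitD (c j) a (step c a j) := by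
  cases a <;> cases h : c j <;> simp only [step, h, if_true, if_false, reduceCtorEq] <;>
    first
      | trivial
      | (split <;> trivial)

/-- The run: history list together with the current configuration. -/
noncomputable def run (σ : List ((Fin m → SQ) × SA) → (Fin m → SQ) → SA) :
    ℕ → List ((Fin m → SQ) × SA) × (Fin m → SQ)
  | 0 => ([], fun _ => SQ.q0)
  | n + 1 =>
      let p := run σ n
      (p.1 ++ [(p.2, σ p.1 p.2)], step p.2 (σ p.1 p.2))

lemma run_hist (σ : List ((Fin m → SQ) × SA) → (Fin m → SQ) → SA) (n : ℕ) :
    (run σ n).1 = List.ofFn (fun i : Fin n =>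
      ((run σ i.1).2, σ (run σ i.1).1 (run σ i.1).2)) := by
  induction n with
  | zero => simp [run]
  | succ n ih =>
      show (run σ n).1 ++ [((run σ n).2, σ (run σ n).1 (run σ n).2)] = _
      rw [List.ofFn_succ', List.concat_eq_append]
      congr 1

lemma cnt_le_of_map {c c' : Fin m → SQ} {s s' : SQ} (h : ∀ j, c j = s → c' j = s') :
    cnt c s ≤ cnt c' s' := by
  apply Finset.card_le_card
  intro j hj
  simp only [Finset.mem_filter, Finset.mem_univ, true_and] at hj ⊢
  exact h j hj

/-- The key invariant: either the configuration has many agents in q0,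
or it has no q0-agents and many agents in each of q1, q2. -/
lemma run_inv (σ : List ((Fin m → SQ) × SA) → (Fin m → SQ) → SA) (n : ℕ) :
    m / 2 ^ (n / 2) ≤ cnt (run σ n).2 SQ.q0 ∨
      ((∀ j, (run σ n).2 j ≠ SQ.q0) ∧
        m / 2 ^ ((n + 1) / 2) ≤ cnt (run σ n).2 SQ.q1 ∧
        m / 2 ^ ((n + 1) / 2) ≤ cnt (run σ n).2 SQ.q2) := by
  induction n with
  | zero =>
      left
      simp [run, cnt]
  | succ n ih =>
      set c : Fin m → SQ := (run σ n).2 with hc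
      have hstep : (run σ (n + 1)).2 = step c (σ (run σ n).1 c) := rfl
      rw [hstep]
      set a : SA := σ (run σ n).1 c with ha
      clear_value a
      clear ha hstep
      -- monotonicity of the bound in n
      have hmono : ∀ k l : ℕ, k ≤ l → m / 2 ^ l ≤ m / 2 ^ k := fun k l hkl =>
        Nat.div_le_div_left (Nat.pow_le_pow_right (by norm_num) hkl) (Nat.pow_pos (by norm_num))
      cases a with
      | a =>
          left
          rcases ih with hA | ⟨_, _, hB2⟩
          · calc m / 2 ^ ((n + 1) / 2) ≤ m / 2 ^ (n / 2) := hmono _ _ (by omega)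
              _ ≤ cnt c SQ.q0 := hA
              _ ≤ cnt (step c SA.a) SQ.q0 := cnt_le_of_map (fun j hj => by
                  simp [step, hj])
          · calc m / 2 ^ ((n + 1) / 2) ≤ cnt c SQ.q2 := hB2
              _ ≤ cnt (step c SA.a) SQ.q0 := cnt_le_of_map (fun j hj => by
                  simp [step, hj])
      | b =>
          left
          rcases ih with hA | ⟨_, hB1, _⟩
          · calc m / 2 ^ ((n + 1) / 2) ≤ m / 2 ^ (n / 2) := hmono _ _ (by omega)
              _ ≤ cnt c SQ.q0 := hA
              _ ≤ cnt (step c SA.b) SQ.q0 := cnt_le_of_map (fun j hj => by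
                  simp [step, hj])
          · calc m / 2 ^ ((n + 1) / 2) ≤ cnt c SQ.q1 := hB1
              _ ≤ cnt (step c SA.b) SQ.q0 := cnt_le_of_map (fun j hj => by
                  simp [step, hj])
      | d =>
          right
          have hnoq0 : ∀ j, step c SA.d j ≠ SQ.q0 := by
            intro j
            simp only [step]
            split
            · split <;> simp
            · next h => cases hcj : c j <;> simp_all
          refine ⟨hnoq0, ?_⟩
          rcases ih with hA | ⟨hB0, hB1, hB2⟩
          · -- split the q0 agents
            set T : Finset (Fin m) := Finset.univ.filter fun j => c j = SQ.q0 with hT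
            obtain ⟨hsub, hcard⟩ := splitSet_spec c
            have htcnt : cnt c SQ.q0 = T.card := rfl
            have hq2 : (splitSet c).card ≤ cnt (step c SA.d) SQ.q2 := by
              apply Finset.card_le_card
              intro j hj
              have hj0 : c j = SQ.q0 := by
                have := hsub hj
                simp only [hT, Finset.mem_filter] at this
                exact this.2
              simp only [Finset.mem_filter, Finset.mem_univ, true_and, step, hj0, if_true, hj]
              exact Finset.mem_filter.mpr ⟨Finset.mem_univ _, by simp [hj0, hj]⟩
            have hq1 : (T \ splitSet c).card ≤ cnt (step c SA.d) SQ.q1 := by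
              apply Finset.card_le_card
              intro j hj
              rw [Finset.mem_sdiff] at hj
              have hj0 : c j = SQ.q0 := by
                have := hj.1
                simp only [hT, Finset.mem_filter] at this
                exact this.2
              simp only [Finset.mem_filter, Finset.mem_univ, true_and, step, hj0, if_true,
                hj.2, if_false]
              exact Finset.mem_filter.mpr ⟨Finset.mem_univ _, by simp [hj0, hj.2]⟩
            have hsd : (T \ splitSet c).card = T.card - T.card / 2 := by
              rw [Finset.card_sdiff_of_subset hsub, hcard]
            have hb : m / 2 ^ ((n + 1 + 1) / 2) ≤ T.card / 2 := by
              have h1 : (n + 1 + 1) / 2 = n / 2 + 1 := by omega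
              rw [h1, pow_succ, ← Nat.div_div_eq_div_mul]
              exact Nat.div_le_div_right (htcnt ▸ hA)
            constructor
            · refine le_trans ?_ hq1
              rw [hsd]
              have h2 : T.card / 2 * 2 ≤ T.card := Nat.div_mul_le_self _ _
              refine le_trans hb ?_
              omega
            · rw [← hcard] at hb
              exact le_trans hb hq2
          · -- nothing changes
            have hid : step c SA.d = c := by
              funext j
              simp only [step, hB0 j, if_false]
            rw [hid]
            have hm2 : m / 2 ^ ((n + 1 + 1) / 2) ≤ m / 2 ^ ((n + 1) / 2) :=
              hmono _ _ (by omega)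
            exact ⟨le_trans hm2 hB1, le_trans hm2 hB2⟩

end SplitGadget

/-- In the splitting gadget with m agents, no strategy of Player 1 wins in fewer than
2⌊log₂ m⌋ + 1 steps: Player 2 can keep some agent outside the target during all of the
first 2⌊log₂ m⌋ + 1 steps. -/
theorem stmt14 (m : ℕ) (hm : 0 < m) :
    ∀ σ : List ((Fin m → SQ) × SA) → (Fin m → SQ) → SA,
      ∃ (ρ : ℕ → (Fin m → SQ)) (acts : ℕ → SA),
        ρ 0 = (fun _ => SQ.q0) ∧
        (∀ n, acts n = σ (List.ofFn (fun i : Fin n => (ρ i.1, acts i.1))) (ρ n)) ∧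
        (∀ n j, splitD (ρ n j) (acts n) (ρ (n + 1) j)) ∧
        ∀ n, n < 2 * Nat.log 2 m + 1 → ∃ j, ρ n j ≠ SQ.tgt := by
  intro σ
  refine ⟨fun n => (SplitGadget.run σ n).2,
    fun n => σ (SplitGadget.run σ n).1 (SplitGadget.run σ n).2, rfl, ?_, ?_, ?_⟩
  · intro n
    exact congrArg (fun h => σ h ((SplitGadget.run σ n).2)) (SplitGadget.run_hist σ n)
  · intro n j
    exact SplitGadget.step_splitD _ _ _
  · intro n hn
    have hL : 2 ^ Nat.log 2 m ≤ m := Nat.pow_log_le_self 2 hm.ne'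
    have key : ∀ k, k ≤ Nat.log 2 m → 1 ≤ m / 2 ^ k := by
      intro k hk
      rw [Nat.one_le_div_iff (Nat.pow_pos (by norm_num))]
      exact le_trans (Nat.pow_le_pow_right (by norm_num) hk) hL
    have hex : ∀ (s : SQ), s ≠ SQ.tgt → 1 ≤ SplitGadget.cnt (SplitGadget.run σ n).2 s →
        ∃ j, (SplitGadget.run σ n).2 j ≠ SQ.tgt := by
      intro s hs h1
      have : ((Finset.univ.filter fun j => (SplitGadget.run σ n).2 j = s)).Nonempty :=
        Finset.card_pos.mp h1
      obtain ⟨j, hj⟩ := this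
      simp only [Finset.mem_filter] at hj
      exact ⟨j, by rw [hj.2]; exact hs⟩
    rcases SplitGadget.run_inv σ n with hA | ⟨_, hB1, _⟩
    · exact hex SQ.q0 (by simp) (le_trans (key _ (by omega)) hA)
    · exact hex SQ.q1 (by simp) (le_trans (key _ (by omega)) hB1)
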